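/- Let Ω be a finite probability space, F, 𝒬, 𝒜 nonempty finite types, and K, D, M natural numbers with M < D and D + M ≤ K. Let X : Fin K → Ω → F, Q : Ω → 𝒬, and A : Ω → 𝒜 be random variables, and suppose that for every W* ⊆ Fin K with |W*| = D there exists S* ⊆ Fin K with |S*| = M, S* disjoint from W*, such that H[X_{W*} | (A, Q, X_{S*})] = 0. Let W₁ ⊆ Fin K with D ≤ |W₁| < K − M and S₁ ⊆ Fin K with |S₁| = M, S₁ disjoint from W₁, satisfy H[X_{W₁} | (A, Q, X_{S₁})] = 0. Then there exist W₂ ⊆ Fin K with |W₂| > |W₁| and S₂ ⊆ Fin K with |S₂| = M, S₂ disjoint from W₂, such that H[X_{W₂} | (A, Q, X_{S₂})] = 0. -/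

import Mathlib

open Finset Real

/-- Probability of an event under a pmf `p` on a finite sample space. -/
noncomputable def probOf {Ω : Type*} [Fintype Ω] (p : Ω → ℝ) (E : Set Ω) : ℝ :=
  ∑ ω : Ω, E.indicator p ω

/-- Distribution (pmf) of a random variable `X` under `p`. -/
noncomputable def distOf {Ω F : Type*} [Fintype Ω] (p : Ω → ℝ) (X : Ω → F) (y : F) : ℝ :=
  probOf p {ω | X ω = y}

/-- Shannon entropy (natural logarithm) of a random variable on a finite probability space. -/
noncomputable def Hent {Ω F : Type*} [Fintype Ω] [Fintype F] (p : Ω → ℝ) (X : Ω → F) : ℝ :=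
  -∑ y : F, distOf p X y * Real.log (distOf p X y)

/-- Conditional entropy `H[X | Y] = H[(X, Y)] - H[Y]`. -/
noncomputable def Hcond {Ω F G : Type*} [Fintype Ω] [Fintype F] [Fintype G]
    (p : Ω → ℝ) (X : Ω → F) (Y : Ω → G) : ℝ :=
  Hent p (fun ω => (X ω, Y ω)) - Hent p Y

/-- The random variable `X_T = (X i)_{i ∈ T}` obtained by restricting the family `X`
to the index set `T`. -/
def XT {Ω F : Type*} {K : ℕ} (X : Fin K → Ω → F) (T : Finset (Fin K)) :
    Ω → (T → F) :=
  fun ω i => X i ω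

section helpers
variable {Ω F G : Type*} [Fintype Ω] [Fintype F] [Fintype G]
variable (p : Ω → ℝ) (X : Ω → F) (Z : Ω → G)

lemma distOf_nonneg (hp : ∀ ω, 0 ≤ p ω) (y : F) : 0 ≤ distOf p X y :=
  Finset.sum_nonneg fun ω _ => Set.indicator_nonneg (fun _ _ => hp _) _

lemma sum_dist_pair (z : G) :
    ∑ x, distOf p (fun ω => (X ω, Z ω)) (x, z) = distOf p Z z := by
  classical
  unfold distOf probOf
  rw [Finset.sum_comm]
  refine Finset.sum_congr rfl fun ω _ => ?_
  have hval : ∀ x : F, ({ω' | (X ω', Z ω') = (x, z)} : Set Ω).indicator p ω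
      = if X ω = x ∧ Z ω = z then p ω else 0 := by
    intro x
    by_cases hx : (X ω, Z ω) = (x, z)
    · rw [Set.indicator_of_mem (show ω ∈ {ω' | (X ω', Z ω') = (x, z)} from hx) p]
      rw [Prod.ext_iff] at hx
      rw [if_pos hx]
    · rw [Set.indicator_of_notMem (show ω ∉ {ω' | (X ω', Z ω') = (x, z)} from hx) p]
      have hnx : ¬(X ω = x ∧ Z ω = z) := fun hc => hx (by rw [hc.1, hc.2])
      simp [hnx]
  simp_rw [hval]
  by_cases h : Z ω = z
  · simp [Set.indicator_apply, h, Finset.sum_ite_eq]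
  · simp [Set.indicator_apply, h]

lemma le_dist_self (hp : ∀ ω, 0 ≤ p ω) (ω : Ω) : p ω ≤ distOf p X (X ω) := by
  unfold distOf probOf
  have := Finset.single_le_sum (f := fun ω' => Set.indicator {ω' | X ω' = X ω} p ω')
    (fun ω' _ => Set.indicator_nonneg (fun _ _ => hp _) _) (Finset.mem_univ ω)
  simpa [Set.indicator_of_mem, Set.mem_setOf_eq] using this

lemma dist_pair_le (hp : ∀ ω, 0 ≤ p ω) (x : F) (z : G) :
    distOf p (fun ω => (X ω, Z ω)) (x, z) ≤ distOf p Z z := by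
  rw [← sum_dist_pair p X Z z]
  exact Finset.single_le_sum (f := fun x' => distOf p (fun ω => (X ω, Z ω)) (x', z))
    (fun x' _ => distOf_nonneg p (fun ω => (X ω, Z ω)) hp _) (Finset.mem_univ x)

lemma hcond_eq :
    Hcond p X Z = ∑ z, ∑ x, distOf p (fun ω => (X ω, Z ω)) (x, z) *
      (Real.log (distOf p Z z) - Real.log (distOf p (fun ω => (X ω, Z ω)) (x, z))) := by
  unfold Hcond Hent
  rw [Fintype.sum_prod_type, Finset.sum_comm]
  have h1 : ∀ z, ∑ x, distOf p (fun ω => (X ω, Z ω)) (x, z) *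
      (Real.log (distOf p Z z) - Real.log (distOf p (fun ω => (X ω, Z ω)) (x, z)))
      = distOf p Z z * Real.log (distOf p Z z)
        - ∑ x, distOf p (fun ω => (X ω, Z ω)) (x, z) *
            Real.log (distOf p (fun ω => (X ω, Z ω)) (x, z)) := by
    intro z
    simp_rw [mul_sub]
    rw [Finset.sum_sub_distrib, ← Finset.sum_mul, sum_dist_pair]
  simp_rw [h1]
  rw [Finset.sum_sub_distrib]
  ring

/-- If `Hcond p X Z = 0` then `X` is determined by `Z` on the support of `p`. -/
lemma det_of_hcond_zero (hp : ∀ ω, 0 ≤ p ω) (h : Hcond p X Z = 0) :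
    ∀ ω ω', p ω ≠ 0 → p ω' ≠ 0 → Z ω = Z ω' → X ω = X ω' := by
  classical
  rw [hcond_eq] at h
  set d := fun x z => distOf p (fun ω => (X ω, Z ω)) (x, z) with hd
  have hnn : ∀ z ∈ (Finset.univ : Finset G), ∀ x ∈ (Finset.univ : Finset F),
      0 ≤ d x z * (Real.log (distOf p Z z) - Real.log (d x z)) := by
    intro z _ x _
    rcases eq_or_lt_of_le (distOf_nonneg p (fun ω => (X ω, Z ω)) hp (x, z)) with h0 | h0
    · simp [hd, ← h0]
    · have hle := dist_pair_le p X Z hp x z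
      have : Real.log (d x z) ≤ Real.log (distOf p Z z) :=
        Real.log_le_log h0 hle
      nlinarith
  have hzero : ∀ z ∈ (Finset.univ : Finset G), ∀ x ∈ (Finset.univ : Finset F),
      d x z * (Real.log (distOf p Z z) - Real.log (d x z)) = 0 := by
    have := (Finset.sum_eq_zero_iff_of_nonneg
      (fun z _ => Finset.sum_nonneg (hnn z (Finset.mem_univ z)))).mp h
    intro z hz x hx
    exact (Finset.sum_eq_zero_iff_of_nonneg (hnn z hz)).mp (this z hz) x hx
  have key : ∀ x z, d x z ≠ 0 → d x z = distOf p Z z := by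
    intro x z hne
    have h0 : 0 < d x z :=
      lt_of_le_of_ne (distOf_nonneg p (fun ω => (X ω, Z ω)) hp (x, z)) (Ne.symm hne)
    have hz0 : 0 < distOf p Z z := lt_of_lt_of_le h0 (dist_pair_le p X Z hp x z)
    have := hzero z (Finset.mem_univ z) x (Finset.mem_univ x)
    have hlog : Real.log (distOf p Z z) = Real.log (d x z) := by
      rcases mul_eq_zero.mp this with h' | h'
      · exact absurd h' hne
      · linarith [sub_eq_zero.mp h']
    calc d x z = Real.exp (Real.log (d x z)) := (Real.exp_log h0).symm
      _ = Real.exp (Real.log (distOf p Z z)) := by rw [hlog]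
      _ = distOf p Z z := Real.exp_log hz0
  intro ω ω' hω hω' hZ
  by_contra hne
  set z := Z ω with hzdef
  have h1 : 0 < d (X ω) z := lt_of_lt_of_le
    (lt_of_le_of_ne (hp ω) (Ne.symm hω)) (le_dist_self p (fun ω => (X ω, Z ω)) hp ω)
  have h2 : 0 < d (X ω') z := by
    have := le_dist_self p (fun ω => (X ω, Z ω)) hp ω'
    rw [← hZ] at this
    exact lt_of_lt_of_le (lt_of_le_of_ne (hp ω') (Ne.symm hω')) this
  have e1 : d (X ω) z = distOf p Z z := key _ _ h1.ne'
  have e2 : d (X ω') z = distOf p Z z := key _ _ h2.ne'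
  have hsum : d (X ω) z + d (X ω') z ≤ distOf p Z z := by
    rw [← sum_dist_pair p X Z z]
    have : ({X ω, X ω'} : Finset F) ⊆ Finset.univ := Finset.subset_univ _
    calc d (X ω) z + d (X ω') z = ∑ x ∈ ({X ω, X ω'} : Finset F), d x z := by
          rw [Finset.sum_pair hne]
      _ ≤ ∑ x, d x z := Finset.sum_le_sum_of_subset_of_nonneg this
          (fun x _ _ => distOf_nonneg p (fun ω => (X ω, Z ω)) hp (x, z))
  rw [e1, e2] at hsum
  have hz0 : 0 < distOf p Z z := lt_of_lt_of_le h1 (dist_pair_le p X Z hp (X ω) z)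
  linarith

/-- If `X` is determined by `Z` on the support of `p`, then `Hcond p X Z = 0`. -/
lemma hcond_zero_of_det (hp : ∀ ω, 0 ≤ p ω)
    (hdet : ∀ ω ω', p ω ≠ 0 → p ω' ≠ 0 → Z ω = Z ω' → X ω = X ω') :
    Hcond p X Z = 0 := by
  classical
  rw [hcond_eq]
  refine Finset.sum_eq_zero fun z _ => Finset.sum_eq_zero fun x _ => ?_
  by_cases hxz : distOf p (fun ω => (X ω, Z ω)) (x, z) = 0
  · simp [hxz]
  · have heq : distOf p (fun ω => (X ω, Z ω)) (x, z) = distOf p Z z := by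
      unfold distOf probOf at hxz ⊢
      obtain ⟨ω₀, -, hω₀⟩ := Finset.exists_ne_zero_of_sum_ne_zero hxz
      have hmem : X ω₀ = x ∧ Z ω₀ = z ∧ ¬p ω₀ = 0 := by
        simpa [Set.indicator_apply, Set.mem_setOf_eq, Prod.mk.injEq] using hω₀
      obtain ⟨hx₀, hz₀, hp₀⟩ := hmem
      refine Finset.sum_congr rfl fun ω _ => ?_
      by_cases hpω : p ω = 0
      · rw [Set.indicator_apply, Set.indicator_apply, hpω]
        simp
      · by_cases hzω : Z ω = z
        · have hxω : X ω = x := by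
            rw [← hx₀]
            exact hdet ω ω₀ hpω hp₀ (by rw [hzω, hz₀])
          rw [Set.indicator_apply, Set.indicator_apply]
          rw [if_pos (show ω ∈ {ω | (fun ω => (X ω, Z ω)) ω = (x, z)} by
            simp [Set.mem_setOf_eq, hxω, hzω])]
          rw [if_pos (show ω ∈ {ω | Z ω = z} from hzω)]
        · have hne : (X ω, Z ω) ≠ (x, z) := fun hc => hzω (by injection hc)
          rw [Set.indicator_apply, Set.indicator_apply]
          rw [if_neg (show ω ∉ {ω | (fun ω => (X ω, Z ω)) ω = (x, z)} from hne)]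
          rw [if_neg (show ω ∉ {ω | Z ω = z} from hzω)]
    rw [heq]
    ring
end helpers

theorem stmt_4 {Ω F 𝒬 𝒜 : Type*} [Fintype Ω] [Fintype F] [Nonempty F]
    [Fintype 𝒬] [Nonempty 𝒬] [Fintype 𝒜] [Nonempty 𝒜]
    {K D M : ℕ} (hMD : M < D) (hDMK : D + M ≤ K)
    (p : Ω → ℝ) (hp : ∀ ω, 0 ≤ p ω) (hp1 : ∑ ω, p ω = 1)
    (X : Fin K → Ω → F) (Q : Ω → 𝒬) (A : Ω → 𝒜)
    -- for every candidate demand set there is a compatible candidate side information set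
    (hcond : ∀ Wstar : Finset (Fin K), Wstar.card = D →
      ∃ Sstar : Finset (Fin K), Sstar.card = M ∧ Disjoint Sstar Wstar ∧
        Hcond p (XT X Wstar) (fun ω => (A ω, Q ω, XT X Sstar ω)) = 0)
    (W₁ S₁ : Finset (Fin K)) (hW₁D : D ≤ W₁.card) (hW₁K : W₁.card < K - M)
    (hS₁ : S₁.card = M) (hdisj₁ : Disjoint S₁ W₁)
    (hrec₁ : Hcond p (XT X W₁) (fun ω => (A ω, Q ω, XT X S₁ ω)) = 0) :
    ∃ W₂ S₂ : Finset (Fin K), W₁.card < W₂.card ∧ S₂.card = M ∧ Disjoint S₂ W₂ ∧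
      Hcond p (XT X W₂) (fun ω => (A ω, Q ω, XT X S₂ ω)) = 0 := by
  classical
  -- pick an index j outside W₁ ∪ S₁
  have hMK : M ≤ K := by omega
  have hcardU : (W₁ ∪ S₁).card < K := by
    have h1 := Finset.card_union_le W₁ S₁
    omega
  obtain ⟨j, hj⟩ : ∃ j, j ∉ W₁ ∪ S₁ := by
    by_contra hc
    push_neg at hc
    have : (W₁ ∪ S₁) = Finset.univ := Finset.eq_univ_of_forall hc
    rw [this, Finset.card_univ, Fintype.card_fin] at hcardU
    omega
  have hjW₁ : j ∉ W₁ := fun h => hj (Finset.mem_union_left _ h)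
  have hjS₁ : j ∉ S₁ := fun h => hj (Finset.mem_union_right _ h)
  -- choose T ⊆ W₁ with |T| = D - 1 - M
  obtain ⟨T, hTsub, hTcard⟩ := Finset.exists_subset_card_eq (s := W₁) (n := D - 1 - M) (by omega)
  set Wstar : Finset (Fin K) := insert j (S₁ ∪ T) with hWstarDef
  have hdisjST : Disjoint S₁ T := hdisj₁.mono_right hTsub
  have hS₁Wstar : S₁ ⊆ Wstar := fun i hi =>
    Finset.mem_insert_of_mem (Finset.mem_union_left _ hi)
  have hWstarcard : Wstar.card = D := by
    rw [hWstarDef, Finset.card_insert_of_notMem (by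
        simp only [Finset.mem_union]
        rintro (h | h)
        · exact hjS₁ h
        · exact hjW₁ (hTsub h)),
      Finset.card_union_of_disjoint hdisjST, hS₁, hTcard]
    omega
  obtain ⟨Sstar, hSstarcard, hSdisj, hHrec⟩ := hcond Wstar hWstarcard
  refine ⟨(W₁ ∪ Wstar) \ Sstar, Sstar, ?_, hSstarcard, Finset.disjoint_sdiff, ?_⟩
  · -- cardinality
    have hsub : insert j (W₁ ∪ S₁) ⊆ W₁ ∪ Wstar := by
      intro i hi
      rcases Finset.mem_insert.mp hi with h | h
      · exact h ▸ Finset.mem_union_right _ (Finset.mem_insert_self _ _)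
      · rcases Finset.mem_union.mp h with h | h
        · exact Finset.mem_union_left _ h
        · exact Finset.mem_union_right _ (hS₁Wstar h)
    have h1 : (insert j (W₁ ∪ S₁)).card = W₁.card + M + 1 := by
      rw [Finset.card_insert_of_notMem hj,
        Finset.card_union_of_disjoint hdisj₁.symm, hS₁]
    have h2 := Finset.card_le_card hsub
    have h3 := Finset.le_card_sdiff Sstar (W₁ ∪ Wstar)
    omega
  · -- entropy
    have det1 := det_of_hcond_zero p (XT X Wstar)
      (fun ω => (A ω, Q ω, XT X Sstar ω)) hp hHrec
    have det2 := det_of_hcond_zero p (XT X W₁)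
      (fun ω => (A ω, Q ω, XT X S₁ ω)) hp hrec₁
    apply hcond_zero_of_det p _ _ hp
    intro ω ω' hω hω' hZ
    have hA : A ω = A ω' := congrArg Prod.fst hZ
    have hQ : Q ω = Q ω' := congrArg (fun q => q.2.1) hZ
    have hWstarEq : ∀ i ∈ Wstar, X i ω = X i ω' := by
      intro i hi
      exact congrFun (det1 ω ω' hω hω' hZ) ⟨i, hi⟩
    have hS₁Eq : XT X S₁ ω = XT X S₁ ω' :=
      funext fun i => hWstarEq i.1 (hS₁Wstar i.2)
    have hW₁Eq : ∀ i ∈ W₁, X i ω = X i ω' := by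
      intro i hi
      have := det2 ω ω' hω hω' (by
        show (A ω, Q ω, XT X S₁ ω) = (A ω', Q ω', XT X S₁ ω')
        rw [hA, hQ, hS₁Eq])
      exact congrFun this ⟨i, hi⟩
    funext i
    rcases Finset.mem_union.mp (Finset.mem_sdiff.mp i.2).1 with h | h
    · exact hW₁Eq i.1 h
    · exact hWstarEq i.1 h
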